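/- Let K ≥ 2, let π_1,…,π_K ∈ (0,1) satisfy ∑_{k=1}^K π_k = 1, let p_1,…,p_K ∈ (0,1], and set s_k = p_k ∑_{ℓ≠k} π_ℓ (1 − p_ℓ). Then ( ∑_{k=1}^K π_k p_k ) · ( 1 − ∑_{k≠1} π_k p_k / ( 1 − (1−p_k) π_k ) ) − ∑_{k≠1} π_k s_k / ( 1 − (1−p_k) π_k ) = π_1 p_1. (Note 1 − (1−p_k)π_k > 0 for all k, so all terms are well defined.) -/

import Mathlib

open Finset

/-- **Key algebraic identity in the proof of Theorem 4 (symmetric communication).**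
With confidence weights `π_k ∈ (0,1)` summing to `1`, participation probabilities
`p_k ∈ (0,1]`, and `s_k = p_k ∑_{ℓ≠k} π_ℓ (1-p_ℓ)`, the denominator arising from the
Schur-complement computation simplifies to `π_1 p_1`.  Agents are indexed by `Fin (n+1)`
with agent `1` corresponding to index `0`, and `n ≥ 1` so that `K = n + 1 ≥ 2`. -/
theorem schur_denominator_identity
    {n : ℕ} (hn : 1 ≤ n)
    (π p : Fin (n + 1) → ℝ)
    (hπ : ∀ k, π k ∈ Set.Ioo (0 : ℝ) 1) (hπsum : ∑ k, π k = 1)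
    (hp : ∀ k, p k ∈ Set.Ioc (0 : ℝ) 1)
    (s : Fin (n + 1) → ℝ)
    (hs : ∀ k, s k = p k * ∑ l ∈ univ.erase k, π l * (1 - p l)) :
    (∀ k, 0 < 1 - (1 - p k) * π k) ∧
    (∑ k, π k * p k) *
        (1 - ∑ k ∈ univ.erase 0, π k * p k / (1 - (1 - p k) * π k)) -
      (∑ k ∈ univ.erase 0, π k * s k / (1 - (1 - p k) * π k)) = π 0 * p 0 := by
  have hD : ∀ k, 0 < 1 - (1 - p k) * π k := by
    intro k
    have h1 := hπ k
    have h2 := hp k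
    nlinarith [h1.1, h1.2, h2.1, h2.2]
  refine ⟨hD, ?_⟩
  set A : ℝ := ∑ k, π k * p k with hA
  have hsum1 : ∑ l, π l * (1 - p l) = 1 - A := by
    have : ∑ l, π l * (1 - p l) = (∑ l, π l) - ∑ l, π l * p l := by
      rw [← Finset.sum_sub_distrib]; apply Finset.sum_congr rfl; intro l _; ring
    rw [this, hπsum, hA]
  have key : ∀ k ∈ univ.erase (0 : Fin (n+1)),
      A * (π k * p k / (1 - (1 - p k) * π k)) + π k * s k / (1 - (1 - p k) * π k)
        = π k * p k := by
    intro k _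
    have hDk := hD k
    have hDk' : (1 - (1 - p k) * π k) ≠ 0 := ne_of_gt hDk
    have hsk : s k = p k * ((1 - A) - π k * (1 - p k)) := by
      rw [hs k, Finset.sum_erase_eq_sub (Finset.mem_univ k), hsum1]
    rw [hsk]
    rw [mul_div_assoc', ← add_div, div_eq_iff hDk']
    ring
  calc A * (1 - ∑ k ∈ univ.erase 0, π k * p k / (1 - (1 - p k) * π k)) -
      (∑ k ∈ univ.erase 0, π k * s k / (1 - (1 - p k) * π k))
      = A - ∑ k ∈ univ.erase 0,
          (A * (π k * p k / (1 - (1 - p k) * π k)) +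
            π k * s k / (1 - (1 - p k) * π k)) := by
        rw [Finset.sum_add_distrib, ← Finset.mul_sum]; ring
    _ = A - ∑ k ∈ univ.erase 0, π k * p k := by rw [Finset.sum_congr rfl key]
    _ = π 0 * p 0 := by
        rw [Finset.sum_erase_eq_sub (Finset.mem_univ (0 : Fin (n+1))), hA]; ring
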